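/- Let n ≥ 1 and define f : EuclideanSpace ℂ (Fin n) × EuclideanSpace ℂ (Fin n) → ℂ × ℝ by f(x, y) = (2·⟪x, y⟫, ‖y‖² − ‖x‖²), where ⟪·,·⟫ is the Hermitian inner product. Then f satisfies the Milnor condition at the origin in the strongest sense: for every (x, y) ≠ (0, 0), the real Fréchet derivative fderiv ℝ f (x,y) is a surjective real-linear map onto ℂ × ℝ. -/

import Mathlib

abbrev Emil (n : ℕ) := EuclideanSpace ℂ (Fin n)

open ContinuousLinearMap


/-- Milnor's example
`f(x, y) = (2⟪x, y⟫, ‖y‖² − ‖x‖²) : ℂⁿ × ℂⁿ → ℂ × ℝ` satisfies the Milnor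
condition at the origin in the strongest sense: at every point
`(x, y) ≠ (0, 0)` the real Fréchet derivative is surjective onto `ℂ × ℝ`. -/
theorem milnor_example_satisfies_milnor_condition
    (n : ℕ) (hn : 1 ≤ n) :
    ∀ p : EuclideanSpace ℂ (Fin n) × EuclideanSpace ℂ (Fin n), p ≠ 0 →
      Function.Surjective
        (fderiv ℝ
          (fun q : EuclideanSpace ℂ (Fin n) × EuclideanSpace ℂ (Fin n) =>
            ((2 * (inner ℂ q.1 q.2 : ℂ), ‖q.2‖ ^ 2 - ‖q.1‖ ^ 2) : ℂ × ℝ)) p) := by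
  rintro ⟨x, y⟩ hp
  have hfst : HasFDerivAt (fun q : (Emil n × Emil n) => q.1) (fst ℝ (Emil n) (Emil n)) (x, y) := hasFDerivAt_fst
  have hsnd : HasFDerivAt (fun q : (Emil n × Emil n) => q.2) (snd ℝ (Emil n) (Emil n)) (x, y) := hasFDerivAt_snd
  have h1 : HasFDerivAt (fun q : (Emil n × Emil n) => (2 * (inner ℂ q.1 q.2 : ℂ)))
      ((2:ℂ) • ((fderivInnerCLM ℂ ((x,y).1, (x,y).2)).comp ((fst ℝ (Emil n) (Emil n)).prod (snd ℝ (Emil n) (Emil n))))) (x, y) :=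
    (hfst.inner ℂ hsnd).const_mul 2
  have h2 : HasFDerivAt (fun q : (Emil n × Emil n) => (inner ℂ q.2 q.2 : ℂ))
      ((fderivInnerCLM ℂ ((x,y).2, (x,y).2)).comp ((snd ℝ (Emil n) (Emil n)).prod (snd ℝ (Emil n) (Emil n)))) (x, y) :=
    hsnd.inner ℂ hsnd
  have h3 : HasFDerivAt (fun q : (Emil n × Emil n) => (inner ℂ q.1 q.1 : ℂ))
      ((fderivInnerCLM ℂ ((x,y).1, (x,y).1)).comp ((fst ℝ (Emil n) (Emil n)).prod (fst ℝ (Emil n) (Emil n)))) (x, y) :=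
    hfst.inner ℂ hfst
  have h4 := (Complex.reCLM.hasFDerivAt.comp (x,y) (h2.sub h3))
  have heq : (fun q : (Emil n × Emil n) => ‖q.2‖ ^ 2 - ‖q.1‖ ^ 2)
      = fun q : (Emil n × Emil n) => Complex.reCLM ((inner ℂ q.2 q.2 : ℂ) - (inner ℂ q.1 q.1 : ℂ)) := by
    funext q
    simp [← inner_self_eq_norm_sq (𝕜 := ℂ)]
  rw [Function.comp_def] at h4; simp only [Pi.sub_apply] at h4; rw [← heq] at h4
  have hD := (HasFDerivAt.prodMk h1 h4).fderiv
  rw [hD]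
  rintro ⟨c, r⟩
  obtain ⟨s, hs_def⟩ : ∃ s : ℝ, s = ‖x‖ ^ 2 + ‖y‖ ^ 2 := ⟨_, rfl⟩
  have hs : (0:ℝ) < s := by
    rcases (by
      by_contra h
      push_neg at h
      exact hp (by simp [Prod.ext_iff, h.1, h.2]) : x ≠ 0 ∨ y ≠ 0) with h | h
    · have := norm_pos_iff.mpr h
      rw [hs_def]; positivity
    · have := norm_pos_iff.mpr h
      rw [hs_def]; positivity
  have h2s : (2 * s) ≠ 0 := by positivity
  obtain ⟨a, hA⟩ : ∃ a : ℝ, a * (2 * s) = c.re := ⟨c.re / (2 * s), by field_simp⟩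
  obtain ⟨b, hB⟩ : ∃ b : ℝ, b * (2 * s) = c.im := ⟨c.im / (2 * s), by field_simp⟩
  obtain ⟨g, hG⟩ : ∃ g : ℝ, g * (2 * s) = r := ⟨r / (2 * s), by field_simp⟩
  have hAc : (a:ℂ) * (2 * (s:ℂ)) = (c.re:ℂ) := by exact_mod_cast congrArg (Complex.ofReal) hA
  have hBc : (b:ℂ) * (2 * (s:ℂ)) = (c.im:ℂ) := by exact_mod_cast congrArg (Complex.ofReal) hB
  have hsC : (s:ℂ) = (‖x‖:ℂ) ^ 2 + (‖y‖:ℂ) ^ 2 := by rw [hs_def]; push_cast; ring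
  have hx2 : (inner ℂ x x : ℂ) = ((‖x‖ ^ 2 : ℝ) : ℂ) := by
    rw [inner_self_eq_norm_sq_to_K]; norm_cast
  have hy2 : (inner ℂ y y : ℂ) = ((‖y‖ ^ 2 : ℝ) : ℂ) := by
    rw [inner_self_eq_norm_sq_to_K]; norm_cast
  have hreim : (c.re:ℂ) + (c.im:ℂ) * Complex.I = c := Complex.re_add_im c
  refine ⟨(((a:ℂ) - b * Complex.I) • y - (g:ℂ) • x,
           ((a:ℂ) + b * Complex.I) • x + (g:ℂ) • y), ?_⟩
  simp only [ContinuousLinearMap.prod_apply, ContinuousLinearMap.smul_apply,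
    ContinuousLinearMap.coe_comp', Function.comp_apply, ContinuousLinearMap.sub_apply,
    fderivInnerCLM_apply, ContinuousLinearMap.coe_fst', ContinuousLinearMap.coe_snd',
    Complex.reCLM_apply, ContinuousLinearMap.prod_apply]
  rw [Prod.mk.injEq]
  simp only [inner_sub_left, inner_sub_right, inner_add_left, inner_add_right,
    inner_smul_left, inner_smul_right, hx2, hy2, map_sub, map_add,
    map_mul, Complex.conj_ofReal, Complex.conj_I, smul_eq_mul]
  push_cast
  constructor
  · linear_combination hAc + Complex.I * hBc + hreim - 2 * ((a:ℂ) + (b:ℂ) * Complex.I) * hsC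
  · simp only [Complex.add_re, Complex.sub_re, Complex.mul_re, Complex.mul_im,
      Complex.add_im, Complex.sub_im, Complex.ofReal_re, Complex.ofReal_im,
      Complex.I_re, Complex.I_im, Complex.neg_re, Complex.neg_im, ← Complex.ofReal_pow]
    linear_combination hG - 2 * g * hs_def
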